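/- Let P and Q be probability measures on a measurable space Ω and set m := (1/2)·(P + Q). Then for every measurable function F : Ω → ℝ such that x ↦ log(1 + exp(−F(x))) is P-integrable and x ↦ log(1 + exp(F(x))) is Q-integrable, one has KL(P ‖ m) + KL(Q ‖ m) ≥ 2·log 2 − ∫ log(1 + exp(−F)) dP − ∫ log(1 + exp(F)) dQ. -/

import Mathlib

open MeasureTheory Real
open scoped ENNReal Classical

/-- Kullback–Leibler divergence of `P` with respect to `Q`, valued in `EReal`,
with value `⊤` when `P` is not absolutely continuous w.r.t. `Q` or the
log-density is not integrable. -/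
noncomputable def klDiv {Ω : Type*} [MeasurableSpace Ω] (P Q : Measure Ω) : EReal :=
  if P ≪ Q ∧ Integrable (fun x => Real.log (P.rnDeriv Q x).toReal) P
  then ((∫ x, Real.log (P.rnDeriv Q x).toReal ∂P : ℝ) : EReal)
  else ⊤

/-- Gibbs-type lower bound via `log y ≥ 1 - 1/y`. -/
lemma gibbs_aux {Ω : Type*} [MeasurableSpace Ω] (μ ν : Measure Ω)
    [IsProbabilityMeasure μ] [IsProbabilityMeasure ν]
    (hμν : μ ≪ ν) (g : Ω → ℝ) (hg : Measurable g)
    (hg0 : ∀ x, 0 < g x) (hg2 : ∀ x, g x ≤ 2)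
    (hint : Integrable (llr μ ν) μ)
    (hlog : Integrable (fun x => Real.log (g x)) μ) :
    ∫ x, Real.log (g x) ∂μ + 1 - ∫ x, g x ∂ν ≤ ∫ x, llr μ ν x ∂μ := by
  set f := μ.rnDeriv ν with hf
  have hf_meas : Measurable f := Measure.measurable_rnDeriv μ ν
  have hf_pos : ∀ᵐ x ∂μ, 0 < f x := Measure.rnDeriv_pos hμν
  have hf_lt : ∀ᵐ x ∂μ, f x < ⊤ := hμν.ae_le (Measure.rnDeriv_lt_top μ ν)
  set φ : Ω → ℝ := fun x => g x / (f x).toReal with hφ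
  have hφ_nonneg : ∀ x, 0 ≤ φ x := fun x =>
    div_nonneg (hg0 x).le ENNReal.toReal_nonneg
  have hφ_meas : Measurable φ := hg.div (hf_meas.ennreal_toReal)
  -- lintegral bound
  have key : ∫⁻ x, ENNReal.ofReal (φ x) ∂μ ≤ ∫⁻ x, ENNReal.ofReal (g x) ∂ν := by
    have h1 : ∫⁻ x, ENNReal.ofReal (φ x) ∂μ
        = ∫⁻ x, ENNReal.ofReal (g x) / f x ∂μ := by
      refine lintegral_congr_ae ?_
      filter_upwards [hf_pos, hf_lt] with x hx hx'
      rw [hφ]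
      rw [ENNReal.ofReal_div_of_pos (ENNReal.toReal_pos hx.ne' hx'.ne),
        ENNReal.ofReal_toReal hx'.ne]
    rw [h1]
    calc ∫⁻ x, ENNReal.ofReal (g x) / f x ∂μ
        = ∫⁻ x, f x * (ENNReal.ofReal (g x) / f x) ∂ν := by
          have hmeas2 : Measurable fun x => ENNReal.ofReal (g x) / f x :=
            hg.ennreal_ofReal.div hf_meas
          conv_lhs => rw [← Measure.withDensity_rnDeriv_eq μ ν hμν]
          rw [lintegral_withDensity_eq_lintegral_mul _ hf_meas hmeas2]
          simp only [Pi.mul_apply]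
      _ ≤ ∫⁻ x, ENNReal.ofReal (g x) ∂ν := by
          refine lintegral_mono fun x => ?_
          rcases eq_or_ne (f x) 0 with h0 | h0
          · simp [h0]
          rcases eq_or_ne (f x) ⊤ with ht | ht
          · simp [ht]
          · rw [ENNReal.mul_div_cancel h0 ht]
  have hg_int : Integrable g ν := by
    refine Integrable.mono' (integrable_const 2) hg.aestronglyMeasurable ?_
    filter_upwards with x
    rw [Real.norm_eq_abs, abs_of_pos (hg0 x)]
    exact hg2 x
  have hφ_top : ∫⁻ x, ENNReal.ofReal (φ x) ∂μ < ⊤ := by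
    refine lt_of_le_of_lt key (lt_of_le_of_lt (lintegral_mono fun x => ?_)
      (by simp : (∫⁻ _, (2:ℝ≥0∞) ∂ν) < ⊤))
    exact ENNReal.ofReal_le_of_le_toReal (by simpa using hg2 x)
  have hφ_int : Integrable φ μ := by
    refine ⟨hφ_meas.aestronglyMeasurable, ?_⟩
    rw [hasFiniteIntegral_iff_ofReal (Filter.Eventually.of_forall hφ_nonneg)]
    exact hφ_top
  -- ∫ φ dμ ≤ ∫ g dν
  have hφg : ∫ x, φ x ∂μ ≤ ∫ x, g x ∂ν := by
    rw [integral_eq_lintegral_of_nonneg_ae (Filter.Eventually.of_forall hφ_nonneg)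
      hφ_meas.aestronglyMeasurable,
      integral_eq_lintegral_of_nonneg_ae (Filter.Eventually.of_forall fun x => (hg0 x).le)
      hg.aestronglyMeasurable]
    exact ENNReal.toReal_mono (by
      refine (lt_of_le_of_lt (lintegral_mono fun x => ?_)
        (by simp : (∫⁻ _, (2:ℝ≥0∞) ∂ν) < ⊤)).ne
      exact ENNReal.ofReal_le_of_le_toReal (by simpa using hg2 x)) key
  -- pointwise inequality
  have hpt : ∀ᵐ x ∂μ, Real.log (g x) + (1 - φ x) ≤ llr μ ν x := by
    filter_upwards [hf_pos, hf_lt] with x hx hx'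
    have hfx : 0 < (f x).toReal := ENNReal.toReal_pos hx.ne' hx'.ne
    have := Real.log_le_sub_one_of_pos (div_pos (hg0 x) hfx)
    rw [Real.log_div (hg0 x).ne' hfx.ne'] at this
    have : Real.log (g x) - Real.log ((f x).toReal) ≤ φ x - 1 := this
    simp only [llr]
    linarith
  have hsub_int : Integrable (fun x => 1 - φ x) μ := (integrable_const 1).sub hφ_int
  have hadd_int : Integrable (fun x => Real.log (g x) + (1 - φ x)) μ := hlog.add hsub_int
  have hle : ∫ x, (Real.log (g x) + (1 - φ x)) ∂μ ≤ ∫ x, llr μ ν x ∂μ :=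
    integral_mono_ae hadd_int hint hpt
  rw [integral_add hlog hsub_int, integral_sub (integrable_const (1:ℝ)) hφ_int,
    integral_const] at hle
  simp only [measure_univ, probReal_univ, ENNReal.toReal_one, smul_eq_mul, one_mul, mul_one] at hle
  linarith

theorem stmt_1 {Ω : Type*} [MeasurableSpace Ω] (P Q : Measure Ω)
    [IsProbabilityMeasure P] [IsProbabilityMeasure Q]
    (m : Measure Ω) (hm : m = (1 / 2 : ℝ≥0∞) • (P + Q))
    (F : Ω → ℝ) (hF : Measurable F)
    (hFP : Integrable (fun x => Real.log (1 + Real.exp (-F x))) P)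
    (hFQ : Integrable (fun x => Real.log (1 + Real.exp (F x))) Q) :
    ((2 * Real.log 2 - ∫ x, Real.log (1 + Real.exp (-F x)) ∂P
        - ∫ x, Real.log (1 + Real.exp (F x)) ∂Q : ℝ) : EReal)
      ≤ klDiv P m + klDiv Q m := by
  have hmP : IsProbabilityMeasure m := by
    constructor
    rw [hm]
    simp [Measure.smul_apply, measure_univ]
    exact ENNReal.inv_two_add_inv_two
  have hPm : P ≪ m := by
    rw [hm]
    intro s hs
    simp only [Measure.smul_apply, Measure.add_apply, smul_eq_mul] at hs
    rcases mul_eq_zero.mp hs with h | h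
    · simp at h
    · exact (add_eq_zero.mp h).1
  have hQm : Q ≪ m := by
    rw [hm]
    intro s hs
    simp only [Measure.smul_apply, Measure.add_apply, smul_eq_mul] at hs
    rcases mul_eq_zero.mp hs with h | h
    · simp at h
    · exact (add_eq_zero.mp h).2
  by_cases hIP : Integrable (fun x => Real.log (P.rnDeriv m x).toReal) P
  swap
  · have : klDiv P m = ⊤ := by rw [klDiv, if_neg]; tauto
    rw [this, EReal.top_add_of_ne_bot]
    · exact le_top
    · rw [klDiv]; split <;> simp
  by_cases hIQ : Integrable (fun x => Real.log (Q.rnDeriv m x).toReal) Q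
  swap
  · have : klDiv Q m = ⊤ := by rw [klDiv, if_neg]; tauto
    rw [this, EReal.add_top_of_ne_bot]
    · exact le_top
    · rw [klDiv]; split <;> simp
  rw [klDiv, if_pos ⟨hPm, hIP⟩, klDiv, if_pos ⟨hQm, hIQ⟩, ← EReal.coe_add,
    EReal.coe_le_coe_iff]
  set g1 : Ω → ℝ := fun x => 2 / (1 + Real.exp (-F x)) with hg1
  set g2 : Ω → ℝ := fun x => 2 / (1 + Real.exp (F x)) with hg2
  have hd1 : ∀ x, (0:ℝ) < 1 + Real.exp (-F x) := fun x => by positivity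
  have hd2 : ∀ x, (0:ℝ) < 1 + Real.exp (F x) := fun x => by positivity
  have hg1_pos : ∀ x, 0 < g1 x := fun x => div_pos two_pos (hd1 x)
  have hg2_pos : ∀ x, 0 < g2 x := fun x => div_pos two_pos (hd2 x)
  have hg1_le : ∀ x, g1 x ≤ 2 := fun x => by
    rw [hg1]; rw [div_le_iff₀ (hd1 x)]; nlinarith [Real.exp_pos (-F x)]
  have hg2_le : ∀ x, g2 x ≤ 2 := fun x => by
    rw [hg2]; rw [div_le_iff₀ (hd2 x)]; nlinarith [Real.exp_pos (F x)]
  have hg1_meas : Measurable g1 :=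
    measurable_const.div ((measurable_const.add (hF.neg.exp)))
  have hg2_meas : Measurable g2 :=
    measurable_const.div ((measurable_const.add (hF.exp)))
  have hlog1 : ∀ x, Real.log (g1 x) = Real.log 2 - Real.log (1 + Real.exp (-F x)) :=
    fun x => Real.log_div two_ne_zero (hd1 x).ne'
  have hlog2 : ∀ x, Real.log (g2 x) = Real.log 2 - Real.log (1 + Real.exp (F x)) :=
    fun x => Real.log_div two_ne_zero (hd2 x).ne'
  have hlog1_int : Integrable (fun x => Real.log (g1 x)) P := by
    simp only [hlog1]
    exact (integrable_const _).sub hFP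
  have hlog2_int : Integrable (fun x => Real.log (g2 x)) Q := by
    simp only [hlog2]
    exact (integrable_const _).sub hFQ
  have h1 := gibbs_aux P m hPm g1 hg1_meas hg1_pos hg1_le hIP hlog1_int
  have h2 := gibbs_aux Q m hQm g2 hg2_meas hg2_pos hg2_le hIQ hlog2_int
  have hg1_int : Integrable g1 m := by
    refine Integrable.mono' (integrable_const 2) hg1_meas.aestronglyMeasurable ?_
    filter_upwards with x
    rw [Real.norm_eq_abs, abs_of_pos (hg1_pos x)]; exact hg1_le x
  have hg2_int : Integrable g2 m := by
    refine Integrable.mono' (integrable_const 2) hg2_meas.aestronglyMeasurable ?_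
    filter_upwards with x
    rw [Real.norm_eq_abs, abs_of_pos (hg2_pos x)]; exact hg2_le x
  have hsum : ∫ x, g1 x ∂m + ∫ x, g2 x ∂m = 2 := by
    rw [← integral_add hg1_int hg2_int]
    have : (fun x => g1 x + g2 x) = fun _ => (2:ℝ) := by
      funext x
      rw [hg1, hg2]
      have h : Real.exp (-F x) * Real.exp (F x) = 1 := by
        rw [← Real.exp_add]; simp
      field_simp
      linear_combination -h
    rw [this, integral_const]
    simp
  have e1 : ∫ x, Real.log (g1 x) ∂P
      = Real.log 2 - ∫ x, Real.log (1 + Real.exp (-F x)) ∂P := by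
    simp only [hlog1]
    rw [integral_sub (integrable_const _) hFP, integral_const]
    simp
  have e2 : ∫ x, Real.log (g2 x) ∂Q
      = Real.log 2 - ∫ x, Real.log (1 + Real.exp (F x)) ∂Q := by
    simp only [hlog2]
    rw [integral_sub (integrable_const _) hFQ, integral_const]
    simp
  rw [e1] at h1
  rw [e2] at h2
  have hllr1 : ∫ x, Real.log (P.rnDeriv m x).toReal ∂P = ∫ x, llr P m x ∂P := rfl
  have hllr2 : ∫ x, Real.log (Q.rnDeriv m x).toReal ∂Q = ∫ x, llr Q m x ∂Q := rfl
  rw [hllr1, hllr2]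
  linarith
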